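/- For all n ≥ 0, the number of nonnesting permutations of the multiset {1,1,2,2,…,n,n} that avoid both patterns 132 and 213 equals F_n², the square of the nth Fibonacci number. -/

import Mathlib

/-- `w` is a permutation of the multiset `{1,1,2,2,…,n,n}`:
a word in which every value in `{1,…,n}` occurs exactly twice
and no other value occurs. -/
def IsMultisetPerm (n : ℕ) (w : List ℕ) : Prop :=
  ∀ i : ℕ, w.count i = if 1 ≤ i ∧ i ≤ n then 2 else 0

/-- `t` is order-isomorphic to the word `σ`:
same length, and entries compare (both `<` and `=`) in the same way. -/
def OrderIsoWord (t σ : List ℕ) : Prop :=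
  t.length = σ.length ∧
  ∀ r s : ℕ, r < σ.length → s < σ.length →
    ((t.getD r 0 < t.getD s 0 ↔ σ.getD r 0 < σ.getD s 0) ∧
     (t.getD r 0 = t.getD s 0 ↔ σ.getD r 0 = σ.getD s 0))

/-- `w` contains the pattern `σ`: some subsequence of `w`
is order-isomorphic to `σ`. -/
def Contains (w σ : List ℕ) : Prop :=
  ∃ t : List ℕ, t.Sublist w ∧ OrderIsoWord t σ

/-- `w` avoids the pattern `σ`. -/
def Avoids (w σ : List ℕ) : Prop := ¬ Contains w σ

/-- `w` is a nonnesting permutation of `{1,1,2,2,…,n,n}`: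
it avoids the patterns `1221` and `2112`. -/
def IsNonnesting (n : ℕ) (w : List ℕ) : Prop :=
  IsMultisetPerm n w ∧ Avoids w [1,2,2,1] ∧ Avoids w [2,1,1,2]

/-! ### Pattern predicates via sublists -/

def NP1221 (w : List ℕ) : Prop := ∀ a b : ℕ, a < b → ¬ [a,b,b,a].Sublist w
def NP2112 (w : List ℕ) : Prop := ∀ a b : ℕ, b < a → ¬ [a,b,b,a].Sublist w
def NP132 (w : List ℕ) : Prop := ∀ a b c : ℕ, a < c → c < b → ¬ [a,b,c].Sublist w
def NP213 (w : List ℕ) : Prop := ∀ a b c : ℕ, b < a → a < c → ¬ [a,b,c].Sublist w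

def Good (w : List ℕ) : Prop := NP1221 w ∧ NP2112 w ∧ NP132 w ∧ NP213 w

lemma oiw_4 {t : List ℕ} {p q r s : ℕ} (h : OrderIsoWord t [p,q,r,s]) :
    ∃ a b c d, t = [a,b,c,d] ∧
      (∀ i j x y u v, i < 4 → j < 4 → t.getD i 0 = x → t.getD j 0 = y →
        ([p,q,r,s].getD i 0 = u) → ([p,q,r,s].getD j 0 = v) →
        ((x < y ↔ u < v) ∧ (x = y ↔ u = v))) := by
  obtain ⟨hlen, hiso⟩ := h
  simp only [List.length_cons, List.length_nil] at hlen
  rcases t with _|⟨a,_|⟨b,_|⟨c,_|⟨d,_|⟨e,t⟩⟩⟩⟩⟩ <;> simp_all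
  intro i j x y u v hi hj hx hy hu hv
  subst hx hy hu hv
  exact hiso i j hi hj

lemma oiw_3 {t : List ℕ} {p q r : ℕ} (h : OrderIsoWord t [p,q,r]) :
    ∃ a b c, t = [a,b,c] ∧
      (∀ i j x y u v, i < 3 → j < 3 → t.getD i 0 = x → t.getD j 0 = y →
        ([p,q,r].getD i 0 = u) → ([p,q,r].getD j 0 = v) →
        ((x < y ↔ u < v) ∧ (x = y ↔ u = v))) := by
  obtain ⟨hlen, hiso⟩ := h
  simp only [List.length_cons, List.length_nil] at hlen
  rcases t with _|⟨a,_|⟨b,_|⟨c,_|⟨d,t⟩⟩⟩⟩ <;> simp_all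
  intro i j x y u v hi hj hx hy hu hv
  subst hx hy hu hv
  exact hiso i j hi hj

lemma avoids_1221_iff (w : List ℕ) : Avoids w [1,2,2,1] ↔ NP1221 w := by
  constructor
  · intro hav a b hab hsub
    exact hav ⟨[a,b,b,a], hsub, by
      refine ⟨rfl, ?_⟩
      intro r s hr hs
      simp only [List.length_cons, List.length_nil] at hr hs
      interval_cases r <;> interval_cases s <;>
        simp [List.getD] <;> omega⟩
  · rintro hnp ⟨t, hsub, hiso⟩
    obtain ⟨a, b, c, d, rfl, hcmp⟩ := oiw_4 hiso
    have h01 := hcmp 0 1 a b 1 2 (by norm_num) (by norm_num) rfl rfl rfl rfl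
    have h12 := hcmp 1 2 b c 2 2 (by norm_num) (by norm_num) rfl rfl rfl rfl
    have h03 := hcmp 0 3 a d 1 1 (by norm_num) (by norm_num) rfl rfl rfl rfl
    have hab : a < b := h01.1.mpr (by norm_num)
    have hbc : b = c := h12.2.mpr rfl
    have had : a = d := h03.2.mpr rfl
    subst hbc had
    exact hnp a b hab hsub

lemma avoids_2112_iff (w : List ℕ) : Avoids w [2,1,1,2] ↔ NP2112 w := by
  constructor
  · intro hav a b hab hsub
    exact hav ⟨[a,b,b,a], hsub, by
      refine ⟨rfl, ?_⟩
      intro r s hr hs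
      simp only [List.length_cons, List.length_nil] at hr hs
      interval_cases r <;> interval_cases s <;>
        simp [List.getD] <;> omega⟩
  · rintro hnp ⟨t, hsub, hiso⟩
    obtain ⟨a, b, c, d, rfl, hcmp⟩ := oiw_4 hiso
    have h01 := hcmp 0 1 a b 2 1 (by norm_num) (by norm_num) rfl rfl rfl rfl
    have h12 := hcmp 1 2 b c 1 1 (by norm_num) (by norm_num) rfl rfl rfl rfl
    have h03 := hcmp 0 3 a d 2 2 (by norm_num) (by norm_num) rfl rfl rfl rfl
    have h1 : ¬ a < b := fun h => by simpa using h01.1.mp h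
    have h2 : a ≠ b := fun h => by simpa using h01.2.mp h
    have hbc : b = c := h12.2.mpr rfl
    have had : a = d := h03.2.mpr rfl
    subst hbc had
    exact hnp a b (by omega) hsub

lemma avoids_132_iff (w : List ℕ) : Avoids w [1,3,2] ↔ NP132 w := by
  constructor
  · intro hav a b c h1 h2 hsub
    exact hav ⟨[a,b,c], hsub, by
      refine ⟨rfl, ?_⟩
      intro r s hr hs
      simp only [List.length_cons, List.length_nil] at hr hs
      interval_cases r <;> interval_cases s <;>
        simp [List.getD] <;> omega⟩
  · rintro hnp ⟨t, hsub, hiso⟩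
    obtain ⟨a, b, c, rfl, hcmp⟩ := oiw_3 hiso
    have h02 := hcmp 0 2 a c 1 2 (by norm_num) (by norm_num) rfl rfl rfl rfl
    have h21 := hcmp 2 1 c b 2 3 (by norm_num) (by norm_num) rfl rfl rfl rfl
    exact hnp a b c (h02.1.mpr (by norm_num)) (h21.1.mpr (by norm_num)) hsub

lemma avoids_213_iff (w : List ℕ) : Avoids w [2,1,3] ↔ NP213 w := by
  constructor
  · intro hav a b c h1 h2 hsub
    exact hav ⟨[a,b,c], hsub, by
      refine ⟨rfl, ?_⟩
      intro r s hr hs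
      simp only [List.length_cons, List.length_nil] at hr hs
      interval_cases r <;> interval_cases s <;>
        simp [List.getD] <;> omega⟩
  · rintro hnp ⟨t, hsub, hiso⟩
    obtain ⟨a, b, c, rfl, hcmp⟩ := oiw_3 hiso
    have h10 := hcmp 1 0 b a 1 2 (by norm_num) (by norm_num) rfl rfl rfl rfl
    have h02 := hcmp 0 2 a c 2 3 (by norm_num) (by norm_num) rfl rfl rfl rfl
    exact hnp a b c (h10.1.mpr (by norm_num)) (h02.1.mpr (by norm_num)) hsub

/-! ### Families -/

def Sset (n : ℕ) : Set (List ℕ) := {w | IsMultisetPerm n w ∧ Good w}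

def CountD (m : ℕ) (w : List ℕ) : Prop :=
  ∀ i : ℕ, w.count i = if i = m then 1 else if 1 ≤ i ∧ i < m then 2 else 0

def NoXX (m : ℕ) (w : List ℕ) : Prop := ∀ x : ℕ, x < m → ¬ [x,x,m].Sublist w

def Dset (m : ℕ) : Set (List ℕ) := {w | CountD m w ∧ Good w ∧ NoXX m w}

/-- `ascAux k a = [a,a,a+1,a+1,…,a+k-1,a+k-1]` -/
def ascAux : ℕ → ℕ → List ℕ
  | 0, _ => []
  | k+1, a => a :: a :: ascAux k (a+1)

/-- `asc a n = [a,a,a+1,a+1,…,n,n]` (empty if `n < a`). -/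
def asc (a n : ℕ) : List ℕ := ascAux (n + 1 - a) a

lemma ascAux_count (k : ℕ) : ∀ a i, (ascAux k a).count i = if a ≤ i ∧ i < a + k then 2 else 0 := by
  induction k with
  | zero => intro a i; simp only [ascAux, List.count_nil]; rw [if_neg (by omega)]
  | succ k ih =>
    intro a i
    simp only [ascAux, List.count_cons, ih (a+1) i, beq_iff_eq]
    split_ifs <;> omega

lemma asc_count (a n i : ℕ) : (asc a n).count i = if a ≤ i ∧ i ≤ n then 2 else 0 := by
  rw [asc, ascAux_count]
  by_cases h : a ≤ i ∧ i ≤ n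
  · rw [if_pos (by omega), if_pos h]
  · rw [if_neg (by omega), if_neg h]

lemma ascAux_mem {k a x : ℕ} (h : x ∈ ascAux k a) : a ≤ x ∧ x < a + k := by
  have := (List.count_pos_iff).2 h
  rw [ascAux_count] at this
  split_ifs at this with h'
  · exact h'
  · omega

lemma asc_mem {a n x : ℕ} (h : x ∈ asc a n) : a ≤ x ∧ x ≤ n := by
  have := ascAux_mem (k := n + 1 - a) (a := a) h
  omega

lemma ascAux_sorted (k : ℕ) : ∀ a, (ascAux k a).Pairwise (· ≤ ·) := by
  induction k with
  | zero => intro a; simp [ascAux]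
  | succ k ih =>
    intro a
    simp only [ascAux, List.pairwise_cons]
    refine ⟨?_, ?_, ih (a+1)⟩
    · intro b hb
      rcases List.mem_cons.1 hb with h | h
      · omega
      · exact le_of_lt (by have := ascAux_mem h; omega)
    · intro b hb
      exact le_of_lt (by have := ascAux_mem hb; omega)

lemma asc_sorted (a n : ℕ) : (asc a n).Pairwise (· ≤ ·) := ascAux_sorted _ _

lemma asc_eq_cons {a n : ℕ} (h : a ≤ n) : asc a n = a :: a :: asc (a+1) n := by
  have h1 : n + 1 - a = (n + 1 - (a+1)) + 1 := by omega
  rw [asc, h1, ascAux, asc]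

lemma asc_nil {a n : ℕ} (h : n < a) : asc a n = [] := by
  have : n + 1 - a = 0 := by omega
  rw [asc, this, ascAux]

lemma msp_mem_bounds {n : ℕ} {w : List ℕ} (h : IsMultisetPerm n w) {x : ℕ} (hx : x ∈ w) :
    1 ≤ x ∧ x ≤ n := by
  have hp := (List.count_pos_iff).2 hx
  rw [h x] at hp
  split_ifs at hp with hc
  · exact hc
  · omega

lemma countD_mem_bounds {m : ℕ} {w : List ℕ} (h : CountD m w) {x : ℕ} (hx : x ∈ w) :
    x ≤ m ∧ (1 ≤ m → 1 ≤ x) := by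
  have hp := (List.count_pos_iff).2 hx
  rw [h x] at hp
  split_ifs at hp with hc hc2
  · omega
  · omega
  · omega

/-! ### Good basics -/

lemma Good.sublist {w v : List ℕ} (h : Good w) (hv : v.Sublist w) : Good v :=
  ⟨fun a b hab hs => h.1 a b hab (hs.trans hv),
   fun a b hab hs => h.2.1 a b hab (hs.trans hv),
   fun a b c h1 h2 hs => h.2.2.1 a b c h1 h2 (hs.trans hv),
   fun a b c h1 h2 hs => h.2.2.2 a b c h1 h2 (hs.trans hv)⟩

lemma good_of_sorted {p : List ℕ} (hp : p.Pairwise (· ≤ ·)) : Good p := by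
  refine ⟨?_, ?_, ?_, ?_⟩
  · intro a b hab hs
    have := hp.sublist hs
    simp [List.pairwise_cons] at this
    omega
  · intro a b hab hs
    have := hp.sublist hs
    simp [List.pairwise_cons] at this
    omega
  · intro a b c h1 h2 hs
    have := hp.sublist hs
    simp [List.pairwise_cons] at this
    omega
  · intro a b c h1 h2 hs
    have := hp.sublist hs
    simp [List.pairwise_cons] at this
    omega

lemma sep_contra {p Y : List ℕ} (hsep : ∀ x ∈ p, ∀ y ∈ Y, y < x) {x y : ℕ} {l₁ l₂ : List ℕ}
    (h₁ : l₁.Sublist p) (h₂ : l₂.Sublist Y) (hx : x ∈ l₁) (hy : y ∈ l₂) (hxy : x ≤ y) : False :=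
  absurd (hsep x (h₁.subset hx) y (h₂.subset hy)) (by omega)

/-- Separation lemma: concatenating `Good` words with all right values
strictly below all left values is `Good`. -/
lemma good_append_sep {p Y : List ℕ} (hp : Good p) (hY : Good Y)
    (hsep : ∀ x ∈ p, ∀ y ∈ Y, y < x) : Good (p ++ Y) := by
  refine ⟨?_, ?_, ?_, ?_⟩
  · intro a b hab hs
    rw [List.sublist_append_iff] at hs
    obtain ⟨l₁, l₂, heq, h₁, h₂⟩ := hs
    rcases l₁ with _|⟨x1, _|⟨x2, _|⟨x3, _|⟨x4, _|⟨x5, l₁⟩⟩⟩⟩⟩ <;> simp at heq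
    · exact hY.1 a b hab (heq ▸ h₂)
    · obtain ⟨rfl, rfl⟩ := heq
      exact sep_contra hsep (x := a) (y := a) h₁ h₂ (by simp) (by simp) le_rfl
    · obtain ⟨rfl, rfl, rfl⟩ := heq
      exact sep_contra hsep (x := b) (y := b) h₁ h₂ (by simp) (by simp) le_rfl
    · obtain ⟨rfl, rfl, rfl, rfl⟩ := heq
      exact sep_contra hsep (x := a) (y := a) h₁ h₂ (by simp) (by simp) le_rfl
    · obtain ⟨rfl, rfl, rfl, rfl, rfl⟩ := heq
      exact hp.1 a b hab h₁
  · intro a b hab hs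
    rw [List.sublist_append_iff] at hs
    obtain ⟨l₁, l₂, heq, h₁, h₂⟩ := hs
    rcases l₁ with _|⟨x1, _|⟨x2, _|⟨x3, _|⟨x4, _|⟨x5, l₁⟩⟩⟩⟩⟩ <;> simp at heq
    · exact hY.2.1 a b hab (heq ▸ h₂)
    · obtain ⟨rfl, rfl⟩ := heq
      exact sep_contra hsep (x := a) (y := a) h₁ h₂ (by simp) (by simp) le_rfl
    · obtain ⟨rfl, rfl, rfl⟩ := heq
      exact sep_contra hsep (x := b) (y := b) h₁ h₂ (by simp) (by simp) le_rfl
    · obtain ⟨rfl, rfl, rfl, rfl⟩ := heq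
      exact sep_contra hsep (x := a) (y := a) h₁ h₂ (by simp) (by simp) le_rfl
    · obtain ⟨rfl, rfl, rfl, rfl, rfl⟩ := heq
      exact hp.2.1 a b hab h₁
  · intro a b c h1 h2 hs
    rw [List.sublist_append_iff] at hs
    obtain ⟨l₁, l₂, heq, h₁, h₂⟩ := hs
    rcases l₁ with _|⟨x1, _|⟨x2, _|⟨x3, _|⟨x4, l₁⟩⟩⟩⟩ <;> simp at heq
    · exact hY.2.2.1 a b c h1 h2 (heq ▸ h₂)
    · obtain ⟨rfl, rfl⟩ := heq
      exact sep_contra hsep (x := a) (y := c) h₁ h₂ (by simp) (by simp) (le_of_lt h1)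
    · obtain ⟨rfl, rfl, rfl⟩ := heq
      exact sep_contra hsep (x := a) (y := c) h₁ h₂ (by simp) (by simp) (le_of_lt h1)
    · obtain ⟨rfl, rfl, rfl, rfl⟩ := heq
      exact hp.2.2.1 a b c h1 h2 h₁
  · intro a b c h1 h2 hs
    rw [List.sublist_append_iff] at hs
    obtain ⟨l₁, l₂, heq, h₁, h₂⟩ := hs
    rcases l₁ with _|⟨x1, _|⟨x2, _|⟨x3, _|⟨x4, l₁⟩⟩⟩⟩ <;> simp at heq
    · exact hY.2.2.2 a b c h1 h2 (heq ▸ h₂)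
    · obtain ⟨rfl, rfl⟩ := heq
      exact sep_contra hsep (x := a) (y := c) h₁ h₂ (by simp) (by simp) (le_of_lt h2)
    · obtain ⟨rfl, rfl, rfl⟩ := heq
      exact sep_contra hsep (x := a) (y := c) h₁ h₂ (by simp) (by simp) (le_of_lt h2)
    · obtain ⟨rfl, rfl, rfl, rfl⟩ := heq
      exact hp.2.2.2 a b c h1 h2 h₁
/-! ### Good for the special prefixes -/

lemma good_bcbc {b c : ℕ} (hbc : b < c) : Good [b,c,b,c] := by
  refine ⟨?_, ?_, ?_, ?_⟩
  · intro a x hax hs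
    have := hs.eq_of_length (by simp)
    simp at this
    omega
  · intro a x hax hs
    have := hs.eq_of_length (by simp)
    simp at this
    omega
  · intro a x z h1 h2 hs
    have ha := hs.subset (show a ∈ [a,x,z] by simp)
    have hx := hs.subset (show x ∈ [a,x,z] by simp)
    have hz := hs.subset (show z ∈ [a,x,z] by simp)
    simp at ha hx hz
    omega
  · intro a x z h1 h2 hs
    have ha := hs.subset (show a ∈ [a,x,z] by simp)
    have hx := hs.subset (show x ∈ [a,x,z] by simp)
    have hz := hs.subset (show z ∈ [a,x,z] by simp)
    simp at ha hx hz
    omega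

lemma good_chain_append {b c : ℕ} {Z : List ℕ} (hbc : b < c) (hZ : Good Z)
    (hle : ∀ z ∈ Z, z ≤ b) (hxx : NoXX b Z) : Good ([c,b,c] ++ Z) := by
  have memp : ∀ x : ℕ, x ∈ ([c,b,c] : List ℕ) → b ≤ x := by
    intro x hx; simp at hx; omega
  refine ⟨?_, ?_, ?_, ?_⟩
  · intro a x hax hs
    rw [List.sublist_append_iff] at hs
    obtain ⟨l₁, l₂, heq, h₁, h₂⟩ := hs
    rcases l₁ with _|⟨x1, _|⟨x2, _|⟨x3, _|⟨x4, _|⟨x5, l₁⟩⟩⟩⟩⟩ <;> simp at heq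
    · exact hZ.1 a x hax (heq ▸ h₂)
    · obtain ⟨rfl, rfl⟩ := heq
      have h1 := memp a (h₁.subset (by simp))
      have h2 := hle x (h₂.subset (by simp))
      omega
    · obtain ⟨rfl, rfl, rfl⟩ := heq
      have h1 := memp x (h₁.subset (by simp))
      have h2 := hle x (h₂.subset (by simp))
      have h3 := memp a (h₁.subset (by simp))
      omega
    · obtain ⟨rfl, rfl, rfl, rfl⟩ := heq
      have h1 := hle a (h₂.subset (by simp))
      have h2 := memp a (h₁.subset (by simp))
      have h3 : a = b := by omega
      subst h3
      have h4 := h₁.subset (show x ∈ [a,x,x] by simp)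
      simp at h4
      have h5 : x = c := by omega
      subst h5
      have := h₁.eq_of_length (by simp)
      simp at this
      omega
    · exact absurd h₁.length_le (by simp)
  · intro a x hax hs
    rw [List.sublist_append_iff] at hs
    obtain ⟨l₁, l₂, heq, h₁, h₂⟩ := hs
    rcases l₁ with _|⟨x1, _|⟨x2, _|⟨x3, _|⟨x4, _|⟨x5, l₁⟩⟩⟩⟩⟩ <;> simp at heq
    · exact hZ.2.1 a x hax (heq ▸ h₂)
    · obtain ⟨rfl, rfl⟩ := heq
      have h1 := hle a (h₂.subset (by simp))
      have h2 := memp a (h₁.subset (by simp))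
      have h3 : a = b := by omega
      subst h3
      exact hxx x hax h₂
    · obtain ⟨rfl, rfl, rfl⟩ := heq
      have h1 := memp x (h₁.subset (by simp))
      have h2 := hle a (h₂.subset (by simp))
      omega
    · obtain ⟨rfl, rfl, rfl, rfl⟩ := heq
      have h1 := hle a (h₂.subset (by simp))
      have h2 := memp a (h₁.subset (by simp))
      have h3 : a = b := by omega
      subst h3
      have := h₁.eq_of_length (by simp)
      simp at this
      omega
    · exact absurd h₁.length_le (by simp)
  · intro a x z h1 h2 hs
    rw [List.sublist_append_iff] at hs
    obtain ⟨l₁, l₂, heq, h₁, h₂⟩ := hs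
    rcases l₁ with _|⟨x1, _|⟨x2, _|⟨x3, _|⟨x4, l₁⟩⟩⟩⟩ <;> simp at heq
    · exact hZ.2.2.1 a x z h1 h2 (heq ▸ h₂)
    · obtain ⟨rfl, rfl⟩ := heq
      have ha := memp a (h₁.subset (by simp))
      have hz := hle z (h₂.subset (by simp))
      omega
    · obtain ⟨rfl, rfl, rfl⟩ := heq
      have ha := memp a (h₁.subset (by simp))
      have hz := hle z (h₂.subset (by simp))
      omega
    · obtain ⟨rfl, rfl, rfl, rfl⟩ := heq
      have := h₁.eq_of_length (by simp)
      simp at this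
      omega
  · intro a x z h1 h2 hs
    rw [List.sublist_append_iff] at hs
    obtain ⟨l₁, l₂, heq, h₁, h₂⟩ := hs
    rcases l₁ with _|⟨x1, _|⟨x2, _|⟨x3, _|⟨x4, l₁⟩⟩⟩⟩ <;> simp at heq
    · exact hZ.2.2.2 a x z h1 h2 (heq ▸ h₂)
    · obtain ⟨rfl, rfl⟩ := heq
      have ha := memp a (h₁.subset (by simp))
      have hz := hle z (h₂.subset (by simp))
      omega
    · obtain ⟨rfl, rfl, rfl⟩ := heq
      have ha := memp a (h₁.subset (by simp))
      have hz := hle z (h₂.subset (by simp))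
      omega
    · obtain ⟨rfl, rfl, rfl, rfl⟩ := heq
      have := h₁.eq_of_length (by simp)
      simp at this
      omega

lemma good_two_append {b c : ℕ} {Z : List ℕ} (hbc : b < c) (hZ : Good Z)
    (hle : ∀ z ∈ Z, z ≤ b) (hxx : NoXX b Z) : Good ([b,c] ++ Z) := by
  have memp : ∀ x : ℕ, x ∈ ([b,c] : List ℕ) → b ≤ x := by
    intro x hx; simp at hx; omega
  refine ⟨?_, ?_, ?_, ?_⟩
  · intro a x hax hs
    rw [List.sublist_append_iff] at hs
    obtain ⟨l₁, l₂, heq, h₁, h₂⟩ := hs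
    rcases l₁ with _|⟨x1, _|⟨x2, _|⟨x3, l₁⟩⟩⟩ <;> simp at heq
    · exact hZ.1 a x hax (heq ▸ h₂)
    · obtain ⟨rfl, rfl⟩ := heq
      have ha := memp a (h₁.subset (by simp))
      have hx2 := hle x (h₂.subset (by simp))
      omega
    · obtain ⟨rfl, rfl, rfl⟩ := heq
      have h3 := h₁.eq_of_length (by simp)
      simp at h3
      obtain ⟨rfl, rfl⟩ := h3
      have := hle x (h₂.subset (by simp))
      omega
    · have := h₁.length_le
      simp at this
  · intro a x hax hs
    rw [List.sublist_append_iff] at hs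
    obtain ⟨l₁, l₂, heq, h₁, h₂⟩ := hs
    rcases l₁ with _|⟨x1, _|⟨x2, _|⟨x3, l₁⟩⟩⟩ <;> simp at heq
    · exact hZ.2.1 a x hax (heq ▸ h₂)
    · obtain ⟨rfl, rfl⟩ := heq
      have h1 := hle a (h₂.subset (by simp))
      have h2 := memp a (h₁.subset (by simp))
      have h3 : a = b := by omega
      subst h3
      exact hxx x hax h₂
    · obtain ⟨rfl, rfl, rfl⟩ := heq
      have h3 := h₁.eq_of_length (by simp)
      simp at h3
      omega
    · have := h₁.length_le
      simp at this
  · intro a x z h1 h2 hs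
    rw [List.sublist_append_iff] at hs
    obtain ⟨l₁, l₂, heq, h₁, h₂⟩ := hs
    rcases l₁ with _|⟨x1, _|⟨x2, _|⟨x3, l₁⟩⟩⟩ <;> simp at heq
    · exact hZ.2.2.1 a x z h1 h2 (heq ▸ h₂)
    · obtain ⟨rfl, rfl⟩ := heq
      have ha := memp a (h₁.subset (by simp))
      have hz := hle z (h₂.subset (by simp))
      omega
    · obtain ⟨rfl, rfl, rfl⟩ := heq
      have h3 := h₁.eq_of_length (by simp)
      simp at h3
      obtain ⟨rfl, rfl⟩ := h3
      have := hle z (h₂.subset (by simp))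
      omega
    · have := h₁.length_le
      simp at this
  · intro a x z h1 h2 hs
    rw [List.sublist_append_iff] at hs
    obtain ⟨l₁, l₂, heq, h₁, h₂⟩ := hs
    rcases l₁ with _|⟨x1, _|⟨x2, _|⟨x3, l₁⟩⟩⟩ <;> simp at heq
    · exact hZ.2.2.2 a x z h1 h2 (heq ▸ h₂)
    · obtain ⟨rfl, rfl⟩ := heq
      have ha := memp a (h₁.subset (by simp))
      have hz := hle z (h₂.subset (by simp))
      omega
    · obtain ⟨rfl, rfl, rfl⟩ := heq
      have h3 := h₁.eq_of_length (by simp)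
      simp at h3
      omega
    · have := h₁.length_le
      simp at this
/-! ### Soundness: families land in Sset / Dset -/

lemma sound_asc {k n : ℕ} {Y : List ℕ} (hkn : k < n) (hY : Y ∈ Sset k) :
    asc (k+1) n ++ Y ∈ Sset n := by
  obtain ⟨hc, hg⟩ := hY
  constructor
  · intro i
    simp only [List.count_append, asc_count, hc i]
    split_ifs <;> omega
  · refine good_append_sep (good_of_sorted (asc_sorted _ _)) hg ?_
    intro x hx y hy
    have h1 := asc_mem hx
    have h2 := msp_mem_bounds hc hy
    omega

lemma sound_pair {m : ℕ} {Y : List ℕ} (hY : Y ∈ Sset m) :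
    [m+1,m+2,m+1,m+2] ++ Y ∈ Sset (m+2) := by
  obtain ⟨hc, hg⟩ := hY
  constructor
  · intro i
    simp only [List.count_append, List.count_cons, List.count_nil, hc i, beq_iff_eq]
    split_ifs <;> omega
  · refine good_append_sep (good_bcbc (by omega)) hg ?_
    intro x hx y hy
    have h2 := msp_mem_bounds hc hy
    simp at hx
    omega

lemma sound_chain {m : ℕ} {Z : List ℕ} (hZ : Z ∈ Dset (m+1)) :
    [m+2,m+1,m+2] ++ Z ∈ Sset (m+2) := by
  obtain ⟨hc, hg, hxx⟩ := hZ
  constructor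
  · intro i
    simp only [List.count_append, List.count_cons, List.count_nil, hc i, beq_iff_eq]
    split_ifs <;> omega
  · refine good_chain_append (by omega) hg ?_ hxx
    intro z hz
    exact (countD_mem_bounds hc hz).1

lemma sound_d1 {m : ℕ} {u : List ℕ} (hu : u ∈ Sset m) : (m+1) :: u ∈ Dset (m+1) := by
  obtain ⟨hc, hg⟩ := hu
  have hnot : (m+1) ∉ u := fun h => by have := msp_mem_bounds hc h; omega
  refine ⟨?_, ?_, ?_⟩
  · intro i
    simp only [List.count_cons, hc i, beq_iff_eq]
    split_ifs <;> omega
  · have : (m+1) :: u = [m+1] ++ u := rfl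
    rw [this]
    refine good_append_sep (good_of_sorted (by simp)) hg ?_
    intro x hx y hy
    have h2 := msp_mem_bounds hc hy
    simp at hx
    omega
  · intro x hx hs
    have : ((m+1) :: u) = [m+1] ++ u := rfl
    rw [this, List.sublist_append_iff] at hs
    obtain ⟨l₁, l₂, heq, h₁, h₂⟩ := hs
    rcases l₁ with _|⟨x1, _|⟨x2, l₁⟩⟩ <;> simp at heq
    · exact hnot ((heq ▸ h₂).subset (by simp))
    · obtain ⟨rfl, rfl⟩ := heq
      have := h₁.subset (show x ∈ [x] by simp)
      simp at this
      omega
    · have := h₁.length_le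
      simp at this

lemma sound_d2 {m : ℕ} {v : List ℕ} (hv : v ∈ Dset (m+1)) :
    [m+1, m+2] ++ v ∈ Dset (m+2) := by
  obtain ⟨hc, hg, hxx⟩ := hv
  have hnot : (m+2) ∉ v := fun h => by have := countD_mem_bounds hc h; omega
  refine ⟨?_, ?_, ?_⟩
  · intro i
    simp only [List.count_append, List.count_cons, List.count_nil, hc i, beq_iff_eq]
    split_ifs <;> omega
  · refine good_two_append (by omega) hg ?_ hxx
    intro z hz
    exact (countD_mem_bounds hc hz).1
  · intro x hx hs
    rw [List.sublist_append_iff] at hs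
    obtain ⟨l₁, l₂, heq, h₁, h₂⟩ := hs
    rcases l₁ with _|⟨x1, _|⟨x2, _|⟨x3, l₁⟩⟩⟩ <;> simp at heq
    · exact hnot ((heq ▸ h₂).subset (by simp))
    · obtain ⟨rfl, rfl⟩ := heq
      exact hnot (h₂.subset (by simp))
    · obtain ⟨rfl, rfl, rfl⟩ := heq
      have h3 := h₁.eq_of_length (by simp)
      simp at h3
      omega
    · have := h₁.length_le
      simp at this
/-! ### Exhaustiveness helpers -/

lemma first_split {a : ℕ} {l : List ℕ} (h : a ∈ l) :
    ∃ s t, l = s ++ a :: t ∧ a ∉ s := by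
  induction l with
  | nil => cases h
  | cons x xs ih =>
    by_cases hx : a = x
    · exact ⟨[], xs, by simp [hx], by simp⟩
    · obtain ⟨s, t, rfl, hns⟩ := ih (by
        rcases List.mem_cons.1 h with h | h
        · exact absurd h hx
        · exact h)
      exact ⟨x :: s, t, rfl, by simp [hns, hx]⟩

lemma sorted_of_no_desc {l : List ℕ} (h : ∀ x y, y < x → ¬ [x,y].Sublist l) :
    l.Pairwise (· ≤ ·) :=
  List.pairwise_iff_forall_sublist.mpr (fun {x y} hs => not_lt.1 (fun hlt => h x y hlt hs))

lemma two_sub {x : ℕ} {l : List ℕ} (h : 2 ≤ l.count x) : [x,x].Sublist l := by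
  have := List.replicate_sublist_iff.2 h
  simpa using this

/-- Exhaustiveness for `Dset (m+1)`. -/
lemma D_exhaust {m : ℕ} {v : List ℕ} (hv : v ∈ Dset (m+1)) :
    (∃ u ∈ Sset m, v = (m+1) :: u) ∨
    (∃ m', m = m' + 1 ∧ ∃ v' ∈ Dset (m'+1), v = [m'+1, m'+2] ++ v') := by
  obtain ⟨hc, hg, hxx⟩ := hv
  have hmem : (m+1) ∈ v := by
    rw [← List.count_pos_iff, hc (m+1)]
    simp
  obtain ⟨P, R, rfl, hnP⟩ := first_split hmem
  have hPlt : ∀ x ∈ P, x < m+1 := by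
    intro x hx
    have h1 := countD_mem_bounds hc (by simp [hx] : x ∈ P ++ (m+1) :: R)
    have : x ≠ m+1 := fun h => hnP (h ▸ hx)
    omega
  have hPs : P.Pairwise (· ≤ ·) := by
    apply sorted_of_no_desc
    intro x y hyx hs
    have hxlt := hPlt x (hs.subset (by simp))
    refine hg.2.2.2 x y (m+1) hyx hxlt ?_
    have : List.Sublist ([x,y] ++ [m+1]) (P ++ (m+1) :: R) :=
      hs.append (List.cons_sublist_cons.mpr (List.nil_sublist R))
    simpa using this
  have hPnr : ∀ x ∈ P, P.count x = 1 := by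
    intro x hx
    have h1 : 1 ≤ P.count x := List.count_pos_iff.2 hx
    by_contra hcon
    have h2 : 2 ≤ P.count x := by omega
    refine hxx x (hPlt x hx) ?_
    have : List.Sublist ([x,x] ++ [m+1]) (P ++ (m+1) :: R) :=
      (two_sub h2).append (List.cons_sublist_cons.mpr (List.nil_sublist R))
    simpa using this
  rcases P with _ | ⟨b, P₂⟩
  · left
    refine ⟨R, ⟨?_, hg.sublist (by simp)⟩, rfl⟩
    intro i
    have h1 := hc i
    simp only [List.nil_append, List.count_cons, beq_iff_eq] at h1
    split_ifs at h1 ⊢ <;> omega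
  · right
    have hb1 : 1 ≤ b := (countD_mem_bounds hc (by simp)).2 (by omega)
    have hblt : b < m + 1 := hPlt b (by simp)
    -- P₂ = []
    have hP₂ : P₂ = [] := by
      rcases P₂ with _ | ⟨y, P₃⟩
      · rfl
      · exfalso
        have hby : [b, y].Sublist (b :: y :: P₃) :=
          List.cons_sublist_cons.mpr (List.cons_sublist_cons.mpr (List.nil_sublist _))
        have hble : b ≤ y := (List.pairwise_iff_forall_sublist.mp hPs) hby
        have hbne : b ≠ y := by
          intro h
          have h2 := hPnr b (by simp)
          subst h
          simp [List.count_cons] at h2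
        have hylt : y < m+1 := hPlt y (by simp)
        have h2 := hPnr y (by simp)
        have h1 := hc y
        rw [List.count_append, h2, List.count_cons] at h1
        have hyR : y ∈ R := by
          rw [← List.count_pos_iff]
          simp only [beq_iff_eq] at h1
          split_ifs at h1 <;> omega
        refine hg.2.2.1 b (m+1) y (by omega) hylt ?_
        have : List.Sublist ([b] ++ [m+1, y]) ((b :: y :: P₃) ++ (m+1) :: R) := by
          refine List.Sublist.append ?_ ?_
          · exact List.cons_sublist_cons.mpr (List.nil_sublist _)
          · exact List.cons_sublist_cons.mpr (List.singleton_sublist.mpr hyR)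
        simpa using this
    subst hP₂
    -- b + 1 = m + 1
    have hbm : b = m := by
      by_contra hbm
      have h1 := hc (b+1)
      simp only [List.count_append, List.count_cons, List.count_nil, beq_iff_eq] at h1
      have h2 : (b+1) ∈ R := by
        rw [← List.count_pos_iff]
        split_ifs at h1 <;> omega
      refine hg.2.2.1 b (m+1) (b+1) (by omega) (by omega) ?_
      have : List.Sublist ([b] ++ [m+1, b+1]) ([b] ++ (m+1) :: R) := by
        refine List.Sublist.append (List.Sublist.refl _) ?_
        exact List.cons_sublist_cons.mpr (List.singleton_sublist.mpr h2)
      simpa using this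
    subst hbm
    obtain ⟨m', rfl⟩ : ∃ m', b = m' + 1 := ⟨b - 1, by omega⟩
    refine ⟨m', rfl, R, ⟨?_, hg.sublist (by simp), ?_⟩, by simp⟩
    · intro i
      have h1 := hc i
      simp only [List.count_append, List.count_cons, List.count_nil, beq_iff_eq] at h1
      split_ifs at h1 ⊢ <;> omega
    · intro x hx hs
      refine hg.2.1 (m'+1) x hx ?_
      have : List.Sublist ([m'+1] ++ ([x,x,m'+1])) ([m'+1] ++ (m'+2) :: R) :=
        (List.Sublist.refl _).append (hs.cons _)
      simpa using this
/-! ### asc snoc -/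

lemma ascAux_snoc (k : ℕ) : ∀ a, ascAux (k+1) a = ascAux k a ++ [a+k, a+k] := by
  induction k with
  | zero => intro a; simp [ascAux]
  | succ k ih =>
    intro a
    have : ascAux (k+2) a = a :: a :: ascAux (k+1) (a+1) := rfl
    rw [this, ih (a+1)]
    have h2 : ascAux (k+1) a = a :: a :: ascAux k (a+1) := rfl
    rw [h2]
    simp [List.append_assoc]
    omega

lemma asc_snoc {a n : ℕ} (h : a ≤ n + 1) : asc a (n+1) = asc a n ++ [n+1, n+1] := by
  rcases Nat.lt_or_ge n a with hlt | hge
  · have ha : a = n + 1 := by omega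
    subst ha
    rw [asc_eq_cons le_rfl, asc_nil (by omega), asc_nil (by omega)]
    rfl
  · have h1 : n + 1 + 1 - a = (n + 1 - a) + 1 := by omega
    rw [asc, h1, ascAux_snoc]
    have h2 : a + (n + 1 - a) = n + 1 := by omega
    rw [h2, asc]

/-! ### Exhaustiveness for Sset -/

lemma S_exhaust {n : ℕ} (hn : 1 ≤ n) {w : List ℕ} (hw : w ∈ Sset n) :
    (∃ k, k < n ∧ ∃ Y ∈ Sset k, w = asc (k+1) n ++ Y) ∨
    (∃ m, n = m + 2 ∧
      ((∃ Y ∈ Sset m, w = [m+1,m+2,m+1,m+2] ++ Y) ∨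
       (∃ Z ∈ Dset (m+1), w = [m+2,m+1,m+2] ++ Z))) := by
  obtain ⟨hc, hg⟩ := hw
  have hnw : n ∈ w := by
    rw [← List.count_pos_iff, hc n, if_pos ⟨hn, le_rfl⟩]
    omega
  obtain ⟨P, R, rfl, hnP⟩ := first_split hnw
  have hPlt : ∀ x ∈ P, x < n := by
    intro x hx
    have h1 := msp_mem_bounds hc (by simp [hx] : x ∈ P ++ n :: R)
    have : x ≠ n := fun h => hnP (h ▸ hx)
    omega
  have hPs : P.Pairwise (· ≤ ·) := by
    apply sorted_of_no_desc
    intro x y hyx hs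
    refine hg.2.2.2 x y n hyx (hPlt x (hs.subset (by simp))) ?_
    have : List.Sublist ([x,y] ++ [n]) (P ++ n :: R) :=
      hs.append (List.cons_sublist_cons.mpr (List.nil_sublist R))
    simpa using this
  rcases P with _ | ⟨a, P₂⟩
  · -- w = n :: R
    simp only [List.nil_append] at hc hg ⊢
    have hnR : n ∈ R := by
      have h1 := hc n
      simp only [List.count_cons, beq_iff_eq, if_pos rfl] at h1
      rw [← List.count_pos_iff]
      split_ifs at h1 <;> omega
    obtain ⟨Q, R', rfl, hnQ⟩ := first_split hnR
    have hQlt : ∀ x ∈ Q, x < n := by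
      intro x hx
      have h1 := msp_mem_bounds hc (show x ∈ n :: (Q ++ n :: R') by simp [hx])
      have : x ≠ n := fun h => hnQ (h ▸ hx)
      omega
    have hQs : Q.Pairwise (· ≤ ·) := by
      apply sorted_of_no_desc
      intro x y hyx hs
      refine hg.2.2.2 x y n hyx (hQlt x (hs.subset (by simp))) ?_
      have h2 : List.Sublist ([x,y] ++ [n]) (Q ++ n :: R') :=
        hs.append (List.cons_sublist_cons.mpr (List.nil_sublist R'))
      exact (by simpa using h2 : List.Sublist [x,y,n] (Q ++ n :: R')).cons n
    have hQnr : ∀ x, ¬ List.Sublist [x,x] Q := by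
      intro x hxx
      have hxn : x < n := hQlt x (hxx.subset (by simp))
      refine hg.2.1 n x hxn ?_
      have h2 : List.Sublist ([x,x] ++ [n]) (Q ++ n :: R') :=
        hxx.append (List.cons_sublist_cons.mpr (List.nil_sublist R'))
      exact List.cons_sublist_cons.mpr (by simpa using h2)
    rcases Q with _ | ⟨b, Q₂⟩
    · -- w = n :: n :: R'
      left
      obtain ⟨k, rfl⟩ : ∃ k, n = k + 1 := ⟨n-1, by omega⟩
      simp only [List.nil_append] at hc hg ⊢
      refine ⟨k, by omega, R', ⟨?_, hg.sublist (((List.Sublist.refl R').cons (k+1)).cons (k+1))⟩, ?_⟩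
      · intro i
        have h1 := hc i
        simp only [List.count_cons, beq_iff_eq] at h1
        split_ifs at h1 ⊢ <;> omega
      · rw [asc_eq_cons le_rfl, asc_nil (by omega)]
        rfl
    · -- Q = [b], chain case
      have hbn : b < n := hQlt b (by simp)
      have hb1 : 1 ≤ b := (msp_mem_bounds hc (by simp)).1
      have hQ₂ : Q₂ = [] := by
        rcases Q₂ with _ | ⟨y, Q₃⟩
        · rfl
        · exfalso
          have hby : List.Sublist [b, y] (b :: y :: Q₃) :=
            List.cons_sublist_cons.mpr (List.cons_sublist_cons.mpr (List.nil_sublist _))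
          have hble : b ≤ y := (List.pairwise_iff_forall_sublist.mp hQs) hby
          have hbney : b ≠ y := by
            intro h
            exact hQnr b (h ▸ hby)
          have hylt : y < n := hQlt y (by simp)
          have hy1 : 1 ≤ y := (msp_mem_bounds hc (by simp)).1
          -- second y in R'
          have hycnt : List.count y (b :: y :: Q₃) ≤ 1 := by
            by_contra hcon
            exact hQnr y (two_sub (by omega))
          have hyR : y ∈ R' := by
            have h1 := hc y
            simp only [List.count_cons, List.count_append, beq_iff_eq] at h1
            simp only [List.count_cons, beq_iff_eq] at hycnt
            rw [← List.count_pos_iff]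
            split_ifs at h1 hycnt <;> omega
          refine hg.2.2.1 b n y (by omega) hylt ?_
          have h2 : List.Sublist ([b] ++ [n, y]) ((b :: y :: Q₃) ++ n :: R') := by
            refine List.Sublist.append ?_ ?_
            · exact List.cons_sublist_cons.mpr (List.nil_sublist _)
            · exact List.cons_sublist_cons.mpr (List.singleton_sublist.mpr hyR)
          exact (by simpa using h2 : List.Sublist [b,n,y] _).cons n
      subst hQ₂
      have hbn1 : b + 1 = n := by
        by_contra hcon
        have h1 := hc (b+1)
        simp only [List.count_cons, List.count_append, List.count_nil, beq_iff_eq] at h1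
        have h2 : (b+1) ∈ R' := by
          rw [← List.count_pos_iff]
          split_ifs at h1 <;> omega
        refine hg.2.2.1 b n (b+1) (by omega) (by omega) ?_
        have h3 : List.Sublist ([b] ++ [n, b+1]) ([b] ++ n :: R') :=
          (List.Sublist.refl _).append
            (List.cons_sublist_cons.mpr (List.singleton_sublist.mpr h2))
        exact (by simpa using h3 : List.Sublist [b,n,b+1] _).cons n
      obtain ⟨m, rfl⟩ : ∃ m, n = m + 2 := ⟨n - 2, by omega⟩
      have hbm : b = m + 1 := by omega
      subst hbm
      right
      refine ⟨m, rfl, Or.inr ⟨R', ⟨?_, hg.sublist ?_, ?_⟩, by simp⟩⟩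
      · intro i
        have h1 := hc i
        simp only [List.count_cons, List.count_append, List.count_nil, beq_iff_eq] at h1
        split_ifs at h1 ⊢ <;> omega
      · have : List.Sublist R' ((m+2) :: R') := (List.Sublist.refl R').cons _
        exact ((this.trans (List.sublist_append_right [m+1] _)).cons (m+2))
      · intro x hx hs
        refine hg.2.1 (m+1) x hx ?_
        have h2 : List.Sublist ((m+1) :: [x,x,m+1]) ((m+1) :: (m+2) :: R') :=
          List.cons_sublist_cons.mpr (hs.cons _)
        exact (by simpa using h2 : List.Sublist [m+1,x,x,m+1] _).cons (m+2)
  · -- P = a :: P₂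
    have ha_lt : a < n := hPlt a (by simp)
    have ha1 : 1 ≤ a := (msp_mem_bounds hc (by simp)).1
    have haP : ∀ x ∈ a :: P₂, a ≤ x := by
      intro x hx
      rcases List.mem_cons.1 hx with h | h
      · omega
      · exact (List.pairwise_cons.mp hPs).1 x h
    have hRsmall : ∀ x ∈ R, x ≠ n → x ≤ a := by
      intro x hx hxn
      by_contra hcon
      have hxlt : x < n := by
        have := msp_mem_bounds hc (show x ∈ (a :: P₂) ++ n :: R by simp [hx])
        omega
      refine hg.2.2.1 a n x (by omega) hxlt ?_
      have h2 : List.Sublist ([a] ++ [n, x]) ((a :: P₂) ++ n :: R) := by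
        refine List.Sublist.append ?_ ?_
        · exact List.cons_sublist_cons.mpr (List.nil_sublist _)
        · exact List.cons_sublist_cons.mpr (List.singleton_sublist.mpr hx)
      simpa using h2
    have hPcnt : ∀ x, a < x → x < n → (a :: P₂).count x = 2 := by
      intro x hx1 hx2
      have h1 := hc x
      simp only [List.count_append, List.count_cons, beq_iff_eq] at h1
      have hxR : List.count x R = 0 := by
        rw [List.count_eq_zero]
        intro hmem
        have := hRsmall x hmem (by omega)
        omega
      rw [hxR] at h1
      simp only [List.count_cons, beq_iff_eq]
      split_ifs at h1 ⊢ <;> omega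
    have hcale : (a :: P₂).count a ≤ 2 := by
      have h1 := hc a
      have h2 : List.Sublist (a :: P₂) ((a :: P₂) ++ n :: R) := List.sublist_append_left _ _
      have := h2.count_le a
      rw [h1] at this
      split_ifs at this <;> omega
    have hcage : 1 ≤ (a :: P₂).count a := List.count_pos_iff.2 (by simp)
    by_cases he : (a :: P₂).count a = 2
    · -- ascending case
      left
      obtain ⟨n', rfl⟩ : ∃ n', n = n' + 1 := ⟨n - 1, by omega⟩
      have hPC : ∀ i, (a :: P₂).count i = if a ≤ i ∧ i ≤ n' then 2 else 0 := by
        intro i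
        by_cases h1 : i < a
        · rw [if_neg (by omega), List.count_eq_zero]
          exact fun h => absurd (haP i h) (by omega)
        · by_cases h2 : i = a
          · subst h2
            rw [if_pos (by omega)]
            exact he
          · by_cases h3 : i ≤ n'
            · rw [if_pos (by omega)]
              exact hPcnt i (by omega) (by omega)
            · rw [if_neg (by omega), List.count_eq_zero]
              intro h
              have := hPlt i h
              omega
      have hPeq : a :: P₂ = asc a n' :=
        List.Perm.eq_of_pairwise' hPs (asc_sorted _ _)
          (List.perm_iff_count.mpr (fun i => by rw [hPC i, asc_count]))
      have hnR : (n'+1) ∈ R := by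
        have h2 : List.count (n'+1) (a :: P₂) = 0 := List.count_eq_zero.2 hnP
        have h1 := hc (n'+1)
        rw [List.count_append, h2] at h1
        simp only [List.count_cons, beq_iff_eq] at h1
        rw [← List.count_pos_iff]
        split_ifs at h1 <;> omega
      obtain ⟨Q', Y, rfl, hnQ'⟩ := first_split hnR
      have hQ'nil : Q' = [] := by
        rcases Q' with _ | ⟨x, Q₂'⟩
        · rfl
        · exfalso
          have hxQ : x ∈ x :: Q₂' := by simp
          have hxR : x ∈ (x :: Q₂') ++ (n'+1) :: Y := by simp
          have hxn : x ≠ n'+1 := fun h => hnQ' (h ▸ hxQ)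
          have hxa : x ≤ a := hRsmall x hxR hxn
          have hxna : x ≠ a := by
            intro h
            subst h
            have h1 := hc x
            rw [List.count_append, he, if_pos (by constructor <;> omega)] at h1
            have h2 : 0 < List.count x ((x :: Q₂') ++ (n'+1) :: Y) := List.count_pos_iff.2 hxR
            simp only [List.count_append, List.count_cons, beq_iff_eq] at h1 h2
            split_ifs at h1 h2 <;> omega
          refine hg.2.2.2 a x (n'+1) (by omega) (by omega) ?_
          have h2 : List.Sublist ([a] ++ [x, n'+1]) ((a :: P₂) ++ (n'+1) :: ((x :: Q₂') ++ (n'+1) :: Y)) := by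
            refine List.Sublist.append (List.cons_sublist_cons.mpr (List.nil_sublist _)) ?_
            refine List.Sublist.cons _ ?_
            refine List.Sublist.append (List.singleton_sublist.mpr hxQ) ?_
            exact List.cons_sublist_cons.mpr (List.nil_sublist _)
          simpa using h2
      subst hQ'nil
      obtain ⟨k, rfl⟩ : ∃ k, a = k + 1 := ⟨a - 1, by omega⟩
      refine ⟨k, by omega, Y, ⟨?_, hg.sublist ?_⟩, ?_⟩
      · intro i
        have h1 := hc i
        rw [List.count_append, hPC i] at h1
        simp only [List.nil_append, List.count_cons, beq_iff_eq] at h1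
        split_ifs at h1 ⊢ <;> omega
      · refine List.Sublist.trans ?_ (List.sublist_append_right ((k+1) :: P₂) _)
        simp only [List.nil_append]
        exact ((List.Sublist.refl Y).cons _).cons _
      · rw [asc_snoc (by omega), hPeq]
        simp
    · -- e = 1 : pair case
      have he1 : (a :: P₂).count a = 1 := by omega
      have hP₂nil : P₂ = [] := by
        rcases P₂ with _ | ⟨v, P₃⟩
        · rfl
        · exfalso
          have hvP : v ∈ a :: v :: P₃ := by simp
          have hav : a ≤ v := haP v hvP
          have hvna : v ≠ a := by
            intro h
            subst h
            simp [List.count_cons] at he1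
          have hvlt : v < n := hPlt v hvP
          have hvcnt := hPcnt v (by omega) hvlt
          have hvv : List.Sublist [v,v] (v :: P₃) := by
            apply two_sub
            simp only [List.count_cons, beq_iff_eq] at hvcnt
            simp only [List.count_cons, beq_iff_eq]
            split_ifs at hvcnt ⊢ <;> omega
          have haR : a ∈ R := by
            have h1 := hc a
            simp only [List.count_append, List.count_cons, beq_iff_eq] at h1
            simp only [List.count_cons, beq_iff_eq] at he1
            rw [← List.count_pos_iff]
            split_ifs at h1 he1 <;> omega
          refine hg.1 a v (by omega) ?_
          have h2 : List.Sublist ([a,v,v] ++ [a]) ((a :: v :: P₃) ++ n :: R) := by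
            refine List.Sublist.append (List.cons_sublist_cons.mpr hvv) ?_
            exact (List.singleton_sublist.mpr haR).cons n
          simpa using h2
      subst hP₂nil
      have hana : a + 1 = n := by
        by_contra hcon
        have := hPcnt (a+1) (by omega) (by omega)
        simp [List.count_cons] at this
      obtain ⟨m, rfl⟩ : ∃ m, n = m + 2 := ⟨n - 2, by omega⟩
      have haa : a = m + 1 := by omega
      subst haa
      -- w = [m+1] ++ (m+2) :: R
      have haR : (m+1) ∈ R := by
        have h1 := hc (m+1)
        simp only [List.count_append, List.count_cons, List.count_nil, beq_iff_eq] at h1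
        rw [← List.count_pos_iff]
        split_ifs at h1 <;> omega
      obtain ⟨B, C, rfl, haB⟩ := first_split haR
      have hnB : (m+2) ∉ B := by
        intro hmem
        refine hg.1 (m+1) (m+2) (by omega) ?_
        have h2 : List.Sublist ((m+1) :: (m+2) :: [m+2, m+1]) ((m+1) :: (m+2) :: (B ++ (m+1) :: C)) := by
          refine List.cons_sublist_cons.mpr (List.cons_sublist_cons.mpr ?_)
          refine List.Sublist.append (List.singleton_sublist.mpr hmem) ?_
          exact List.cons_sublist_cons.mpr (List.nil_sublist _)
        simpa using h2
      have hnC : (m+2) ∈ C := by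
        have h1 := hc (m+2)
        simp only [List.count_append, List.count_cons, List.count_nil, beq_iff_eq] at h1
        have h2 : List.count (m+2) B = 0 := List.count_eq_zero.2 hnB
        rw [← List.count_pos_iff]
        split_ifs at h1 <;> omega
      have hBnil : B = [] := by
        rcases B with _ | ⟨x, B₂⟩
        · rfl
        · exfalso
          have hxB : x ∈ x :: B₂ := by simp
          have hxn : x ≠ m+2 := fun h => hnB (h ▸ hxB)
          have hxa : x ≠ m+1 := fun h => haB (h ▸ hxB)
          have hxle : x ≤ m+2 := by
            have := msp_mem_bounds hc (show x ∈ [m+1] ++ (m+2) :: ((x :: B₂) ++ (m+1) :: C) by simp)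
            omega
          refine hg.2.2.2 (m+1) x (m+2) (by omega) (by omega) ?_
          have h2 : List.Sublist [x, m+2] ((x :: B₂) ++ (m+1) :: C) := by
            have := List.Sublist.append (List.singleton_sublist.mpr hxB)
              ((List.singleton_sublist.mpr hnC).cons (m+1))
            simpa using this
          exact List.cons_sublist_cons.mpr (h2.cons (m+2))
      subst hBnil
      simp only [List.nil_append] at hc hg hnC ⊢
      obtain ⟨E, Y, rfl, hnE⟩ := first_split hnC
      have hEnil : E = [] := by
        rcases E with _ | ⟨x, E₂⟩
        · rfl
        · exfalso
          have hxE : x ∈ x :: E₂ := by simp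
          have hxn : x ≠ m+2 := fun h => hnE (h ▸ hxE)
          have hxle : x ≤ m+2 := by
            have := msp_mem_bounds hc
              (show x ∈ [m+1] ++ (m+2) :: (m+1) :: ((x :: E₂) ++ (m+2) :: Y) by simp)
            omega
          have hxa : x ≠ m+1 := by
            intro h
            subst h
            have h1 := hc (m+1)
            simp only [List.count_append, List.count_cons, List.count_nil, beq_iff_eq] at h1
            have h2 : 0 < List.count (m+1) ((m+1) :: E₂) :=
              List.count_pos_iff.2 (by simp)
            simp only [List.count_cons, beq_iff_eq] at h2
            split_ifs at h1 h2 <;> omega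
          refine hg.2.2.2 (m+1) x (m+2) (by omega) (by omega) ?_
          have h2 : List.Sublist [x, m+2] ((x :: E₂) ++ (m+2) :: Y) := by
            have := List.Sublist.append (List.singleton_sublist.mpr hxE)
              (show List.Sublist [m+2] ((m+2) :: Y) from
                List.cons_sublist_cons.mpr (List.nil_sublist Y))
            simpa using this
          exact List.cons_sublist_cons.mpr ((h2.cons (m+1)).cons (m+2))
      subst hEnil
      simp only [List.nil_append] at hc hg ⊢
      right
      refine ⟨m, rfl, Or.inl ⟨Y, ⟨?_, hg.sublist ?_⟩, by simp⟩⟩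
      · intro i
        have h1 := hc i
        simp only [List.count_append, List.count_cons, List.count_nil, beq_iff_eq] at h1
        split_ifs at h1 ⊢ <;> omega
      · have : List.Sublist Y ((m+1) :: (m+2) :: Y) :=
          ((List.Sublist.refl Y).cons _).cons _
        exact (by simpa using (this.cons (m+2)).cons (m+1) :
          List.Sublist Y ((m+1) :: (m+2) :: (m+1) :: (m+2) :: Y))
/-! ### Finiteness -/

lemma Sset_finite (n : ℕ) : (Sset n).Finite := by
  apply Set.Finite.subset ((asc 1 n).permutations.toFinset.finite_toSet)
  intro w hw
  simp only [Finset.coe_sort_coe, List.coe_toFinset, Set.mem_setOf_eq, List.mem_permutations]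
  exact List.perm_iff_count.2 (fun i => by rw [hw.1 i, asc_count])

lemma Dset_finite (m : ℕ) : (Dset (m+1)).Finite := by
  apply Set.Finite.subset (((m+1) :: asc 1 m).permutations.toFinset.finite_toSet)
  intro w hw
  simp only [Finset.coe_sort_coe, List.coe_toFinset, Set.mem_setOf_eq, List.mem_permutations]
  refine List.perm_iff_count.2 (fun i => ?_)
  rw [hw.1 i]
  simp only [List.count_cons, asc_count, beq_iff_eq]
  split_ifs <;> omega

/-! ### The ascending tower -/

def AscSet (j n : ℕ) : Set (List ℕ) :=
  if j < n then (fun Y => asc (j+1) n ++ Y) '' Sset j ∪ AscSet (j+1) n else ∅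
termination_by n - j

lemma AscSet_sub {j n : ℕ} : AscSet j n ⊆ Sset n := by
  intro w hw
  rw [AscSet] at hw
  split_ifs at hw with h
  · rcases hw with ⟨Y, hY, rfl⟩ | hw
    · exact sound_asc h hY
    · exact AscSet_sub hw
  · exact absurd hw (Set.notMem_empty w)
termination_by n - j

lemma mem_AscSet {n k : ℕ} (hk : k < n) {Y : List ℕ} (hY : Y ∈ Sset k)
    (j : ℕ) (hj : j ≤ k) : asc (k+1) n ++ Y ∈ AscSet j n := by
  rw [AscSet, if_pos (by omega)]
  rcases eq_or_lt_of_le hj with rfl | hlt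
  · exact Or.inl ⟨Y, hY, rfl⟩
  · exact Or.inr (mem_AscSet hk hY (j+1) (by omega))
termination_by k - j

lemma AscSet_shape {j n : ℕ} {w : List ℕ} (hw : w ∈ AscSet j n) :
    ∃ k, j ≤ k ∧ k < n ∧ ∃ Y, w = asc (k+1) n ++ Y := by
  rw [AscSet] at hw
  split_ifs at hw with h
  · rcases hw with ⟨Y, _, rfl⟩ | hw
    · exact ⟨j, le_rfl, h, Y, rfl⟩
    · obtain ⟨k, h1, h2, Y, rfl⟩ := AscSet_shape hw
      exact ⟨k, by omega, h2, Y, rfl⟩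
  · exact absurd hw (Set.notMem_empty w)
termination_by n - j

lemma AscSet_finite {j n : ℕ} : (AscSet j n).Finite := by
  rw [AscSet]
  split_ifs with h
  · exact ((Sset_finite j).image _).union AscSet_finite
  · exact Set.finite_empty
termination_by n - j

lemma AscSet_head {j n : ℕ} {w : List ℕ} (hw : w ∈ AscSet j n) :
    ∃ k t, j ≤ k ∧ k < n ∧ w = (k+1) :: (k+1) :: t := by
  obtain ⟨k, h1, h2, Y, rfl⟩ := AscSet_shape hw
  rw [asc_eq_cons (by omega)]
  exact ⟨k, asc (k+2) n ++ Y, h1, h2, by simp⟩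

lemma append_left_inj (p : List ℕ) : Function.Injective (fun Y : List ℕ => p ++ Y) :=
  fun _ _ h => List.append_cancel_left h

lemma AscSet_ncard {n : ℕ} (IH : ∀ k, k < n → (Sset k).ncard = (Nat.fib (k+1))^2)
    (j : ℕ) (hj : j ≤ n) :
    (AscSet j n).ncard + Nat.fib j * Nat.fib (j+1) = Nat.fib n * Nat.fib (n+1) := by
  rcases eq_or_lt_of_le hj with rfl | hlt
  · rw [AscSet, if_neg (by omega)]
    simp
  · rw [AscSet, if_pos hlt]
    have hdisj : Disjoint ((fun Y => asc (j+1) n ++ Y) '' Sset j) (AscSet (j+1) n) := by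
      rw [Set.disjoint_left]
      rintro w ⟨Y, hY, rfl⟩ hw2
      obtain ⟨k, hk1, hk2, t, ht⟩ := AscSet_head hw2
      rw [asc_eq_cons (by omega)] at ht
      simp at ht
      omega
    rw [Set.ncard_union_eq hdisj ((Sset_finite j).image _) AscSet_finite,
      Set.ncard_image_of_injective _ (append_left_inj _), IH j hlt]
    have hrec := AscSet_ncard IH (j+1) (by omega)
    have hfib : Nat.fib (j+2) = Nat.fib j + Nat.fib (j+1) := Nat.fib_add_two
    nlinarith [hrec, hfib]
termination_by n - j
/-! ### Structure equalities -/

lemma good_nil : Good [] :=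
  ⟨fun a b _ hs => by simpa using List.sublist_nil.mp hs,
   fun a b _ hs => by simpa using List.sublist_nil.mp hs,
   fun a b c _ _ hs => by simpa using List.sublist_nil.mp hs,
   fun a b c _ _ hs => by simpa using List.sublist_nil.mp hs⟩

lemma Sset_zero : Sset 0 = {[]} := by
  ext w
  constructor
  · intro hw
    have : w = [] := by
      refine List.eq_nil_iff_forall_not_mem.mpr (fun x hx => ?_)
      have h1 := List.count_pos_iff.2 hx
      rw [hw.1 x] at h1
      split_ifs at h1 with h
      · omega
      · omega
    simp [this]
  · rintro rfl
    exact ⟨fun i => by rw [if_neg (by omega)]; rfl, good_nil⟩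

lemma Dset_one : Dset 1 = (fun u => 1 :: u) '' Sset 0 := by
  ext v
  constructor
  · intro hv
    rcases D_exhaust (m := 0) hv with ⟨u, hu, rfl⟩ | ⟨m', hm', _⟩
    · exact ⟨u, hu, rfl⟩
    · omega
  · rintro ⟨u, hu, rfl⟩
    exact sound_d1 (m := 0) hu

lemma Sset_one : Sset 1 = AscSet 0 1 := by
  apply Set.Subset.antisymm
  · intro w hw
    rcases S_exhaust (by omega) hw with ⟨k, hk, Y, hY, rfl⟩ | ⟨m, hm, _⟩
    · have hk0 : k = 0 := by omega
      subst hk0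
      exact mem_AscSet hk hY 0 le_rfl
    · omega
  · exact AscSet_sub

lemma S_struct (m : ℕ) :
    Sset (m+2) = (AscSet 0 (m+2) ∪ (fun Y => [m+1,m+2,m+1,m+2] ++ Y) '' Sset m) ∪
      (fun Z => [m+2,m+1,m+2] ++ Z) '' Dset (m+1) := by
  apply Set.Subset.antisymm
  · intro w hw
    rcases S_exhaust (by omega) hw with ⟨k, hk, Y, hY, rfl⟩ | ⟨m', hm', hcase⟩
    · exact Or.inl (Or.inl (mem_AscSet hk hY 0 (Nat.zero_le _)))
    · have hmm : m' = m := by omega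
      subst hmm
      rcases hcase with ⟨Y, hY, rfl⟩ | ⟨Z, hZ, rfl⟩
      · exact Or.inl (Or.inr ⟨Y, hY, rfl⟩)
      · exact Or.inr ⟨Z, hZ, rfl⟩
  · rintro w ((hw | ⟨Y, hY, rfl⟩) | ⟨Z, hZ, rfl⟩)
    · exact AscSet_sub hw
    · exact sound_pair hY
    · exact sound_chain hZ

lemma D_struct (m : ℕ) :
    Dset (m+2) = (fun u => (m+2) :: u) '' Sset (m+1) ∪
      (fun v => [m+1,m+2] ++ v) '' Dset (m+1) := by
  apply Set.Subset.antisymm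
  · intro v hv
    rcases D_exhaust (m := m+1) hv with ⟨u, hu, rfl⟩ | ⟨m', hm', v', hv', rfl⟩
    · exact Or.inl ⟨u, hu, rfl⟩
    · have hmm : m' = m := by omega
      subst hmm
      exact Or.inr ⟨v', hv', rfl⟩
  · rintro v (⟨u, hu, rfl⟩ | ⟨v', hv', rfl⟩)
    · exact sound_d1 (m := m+1) hu
    · exact sound_d2 hv'

/-! ### The main counting induction -/

lemma main_count : ∀ n : ℕ, (Sset n).ncard = (Nat.fib (n+1))^2 ∧
    (Dset (n+1)).ncard = Nat.fib (n+1) * Nat.fib (n+2) := by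
  intro n
  induction n using Nat.strong_induction_on with
  | _ n IH =>
  have hS : (Sset n).ncard = (Nat.fib (n+1))^2 := by
    match n, IH with
    | 0, _ => rw [Sset_zero]; simp
    | 1, IH =>
      rw [Sset_one]
      have h := AscSet_ncard (n := 1)
        (fun k hk => by
          have hk0 : k = 0 := by omega
          subst hk0
          exact (IH 0 (by omega)).1) 0 (by omega)
      rw [Nat.fib_zero] at h
      simpa using h
    | (m+2), IH =>
      rw [S_struct m]
      have hIH' : ∀ k, k < m + 2 → (Sset k).ncard = (Nat.fib (k+1))^2 :=
        fun k hk => (IH k hk).1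
      have hA := AscSet_ncard hIH' 0 (by omega)
      rw [Nat.fib_zero] at hA
      have hAfin : (AscSet 0 (m+2)).Finite := AscSet_finite
      have hPfin : ((fun Y => [m+1,m+2,m+1,m+2] ++ Y) '' Sset m).Finite :=
        (Sset_finite m).image _
      have hCfin : ((fun Z => [m+2,m+1,m+2] ++ Z) '' Dset (m+1)).Finite :=
        (Dset_finite m).image _
      have hd1 : Disjoint (AscSet 0 (m+2)) ((fun Y => [m+1,m+2,m+1,m+2] ++ Y) '' Sset m) := by
        rw [Set.disjoint_left]
        rintro w hw ⟨Y, hY, rfl⟩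
        obtain ⟨k, t, _, _, heq⟩ := AscSet_head hw
        simp at heq
        omega
      have hd2 : Disjoint (AscSet 0 (m+2) ∪ (fun Y => [m+1,m+2,m+1,m+2] ++ Y) '' Sset m)
          ((fun Z => [m+2,m+1,m+2] ++ Z) '' Dset (m+1)) := by
        rw [Set.disjoint_left]
        rintro w (hw | ⟨Y, hY, rfl⟩) ⟨Z, hZ, heq⟩
        · obtain ⟨k, t, _, _, heq2⟩ := AscSet_head hw
          rw [heq2] at heq
          simp at heq
          omega
        · simp at heq <;> omega
      rw [Set.ncard_union_eq hd2 (hAfin.union hPfin) hCfin,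
        Set.ncard_union_eq hd1 hAfin hPfin,
        Set.ncard_image_of_injective _ (append_left_inj _),
        Set.ncard_image_of_injective _ (append_left_inj _),
        hIH' m (by omega), (IH m (by omega)).2]
      simp only [Nat.zero_mul, Nat.add_zero] at hA
      rw [hA]
      have h1 : Nat.fib (m+3) = Nat.fib (m+1) + Nat.fib (m+2) := Nat.fib_add_two
      nlinarith [h1]
  refine ⟨hS, ?_⟩
  match n, hS, IH with
  | 0, hS, _ =>
    rw [Dset_one, Set.ncard_image_of_injective _ (List.cons_injective), Sset_zero]
    simp
  | (m+1), hS, IH =>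
    rw [D_struct m]
    have hd : Disjoint ((fun u => (m+2) :: u) '' Sset (m+1))
        ((fun v => [m+1,m+2] ++ v) '' Dset (m+1)) := by
      rw [Set.disjoint_left]
      rintro w ⟨u, hu, rfl⟩ ⟨v, hv, heq⟩
      simp at heq <;> omega
    rw [Set.ncard_union_eq hd ((Sset_finite (m+1)).image _) ((Dset_finite m).image _),
      Set.ncard_image_of_injective _ (List.cons_injective),
      Set.ncard_image_of_injective _ (append_left_inj _),
      hS, (IH m (by omega)).2]
    have h1 : Nat.fib (m+3) = Nat.fib (m+1) + Nat.fib (m+2) := Nat.fib_add_two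
    nlinarith [h1]

theorem nonnesting_avoid_132_213 (n : ℕ) :
    {w : List ℕ | IsNonnesting n w ∧ Avoids w [1,3,2] ∧ Avoids w [2,1,3]}.ncard =
      (Nat.fib (n + 1)) ^ 2 := by
  have hset : {w : List ℕ | IsNonnesting n w ∧ Avoids w [1,3,2] ∧ Avoids w [2,1,3]} = Sset n := by
    ext w
    constructor
    · rintro ⟨⟨h1, h2, h3⟩, h4, h5⟩
      exact ⟨h1, (avoids_1221_iff w).1 h2, (avoids_2112_iff w).1 h3,
        (avoids_132_iff w).1 h4, (avoids_213_iff w).1 h5⟩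
    · rintro ⟨h1, h2, h3, h4, h5⟩
      exact ⟨⟨h1, (avoids_1221_iff w).2 h2, (avoids_2112_iff w).2 h3⟩,
        (avoids_132_iff w).2 h4, (avoids_213_iff w).2 h5⟩
  rw [hset]
  exact (main_count n).1
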